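/- arXiv:1106.0620 — 3 statements merged into one kernel-verified Lean document; each statement's English description precedes it below -/
import Mathlib

section
/- Let φ : ℝ² → ℝ² be differentiable at x with invertible Jacobian Dφ(x), let q : ℝ² → ℝ³ be differentiable and regular at φ(x) (so that g(q)(φ(x)) is positive definite and hence invertible), and let u, v : ℝ² → ℝ be differentiable at φ(x). Then the cometric pairing of differentials is invariant under reparametrization: Σ_{i,j=1}^{2} g^{ij}(q∘φ)(x) · ∂ᵢ(u∘φ)(x) · ∂ⱼ(v∘φ)(x) = Σ_{i,j=1}^{2} g^{ij}(q)(φ(x)) · ∂ᵢu(φ(x)) · ∂ⱼv(φ(x)), where (g^{ij}) denotes the entries of the inverse of the first fundamental form matrix. -/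
open Matrix

/-- The `i`-th partial derivative of a map `q : ℝ² → ℝ³` at `x`. -/
noncomputable def partialDeriv (q : (Fin 2 → ℝ) → Fin 3 → ℝ) (x : Fin 2 → ℝ) (i : Fin 2) :
    Fin 3 → ℝ :=
  fderiv ℝ q x (Pi.single i 1)

/-- The `i`-th partial derivative of a scalar function `u : ℝ² → ℝ` at `x`. -/
noncomputable def partialDerivS (u : (Fin 2 → ℝ) → ℝ) (x : Fin 2 → ℝ) (i : Fin 2) : ℝ :=
  fderiv ℝ u x (Pi.single i 1)

/-- The first fundamental form matrix `g(q)(x)` with entries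
`g_{ij}(x) = ⟨∂ᵢq(x), ∂ⱼq(x)⟩` (Euclidean inner product on ℝ³). -/
noncomputable def firstFF (q : (Fin 2 → ℝ) → Fin 3 → ℝ) (x : Fin 2 → ℝ) :
    Matrix (Fin 2) (Fin 2) ℝ :=
  Matrix.of fun i j => partialDeriv q x i ⬝ᵥ partialDeriv q x j

/-- The Jacobian matrix `Dφ(x)` of a map `φ : ℝ² → ℝ²` at `x`. -/
noncomputable def jacobian (φ : (Fin 2 → ℝ) → Fin 2 → ℝ) (x : Fin 2 → ℝ) :
    Matrix (Fin 2) (Fin 2) ℝ :=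
  LinearMap.toMatrix' (fderiv ℝ φ x : (Fin 2 → ℝ) →ₗ[ℝ] (Fin 2 → ℝ))

lemma sum_sum_eq_dot (M : Matrix (Fin 2) (Fin 2) ℝ) (c d : Fin 2 → ℝ) :
    ∑ i : Fin 2, ∑ j : Fin 2, M i j * c i * d j = c ⬝ᵥ M.mulVec d := by
  simp [dotProduct, mulVec, Fin.sum_univ_two]
  ring

lemma vec_decomp (w : Fin 2 → ℝ) :
    w = ∑ k : Fin 2, w k • (Pi.single k 1 : Fin 2 → ℝ) := by
  conv_lhs => rw [← Finset.univ_sum_single w]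
  refine Finset.sum_congr rfl fun k _ => ?_
  rw [← Pi.single_smul, smul_eq_mul, mul_one]

/-- let `φ : ℝ² → ℝ²` be differentiable at `x` with invertible
Jacobian `Dφ(x)`, let `q : ℝ² → ℝ³` be differentiable and regular at `φ(x)`
(so that `g(q)(φ(x))` is positive definite and hence invertible), and let
`u, v : ℝ² → ℝ` be differentiable at `φ(x)`. Then the cometric pairing of
differentials is invariant under reparametrization:
`Σᵢⱼ g^{ij}(q∘φ)(x) ∂ᵢ(u∘φ)(x) ∂ⱼ(v∘φ)(x) = Σᵢⱼ g^{ij}(q)(φ(x)) ∂ᵢu(φ(x)) ∂ⱼv(φ(x))`,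
where `(g^{ij})` is the inverse of the first fundamental form matrix. -/
theorem cometric_pairing_reparam_invariant (φ : (Fin 2 → ℝ) → Fin 2 → ℝ)
    (q : (Fin 2 → ℝ) → Fin 3 → ℝ) (u v : (Fin 2 → ℝ) → ℝ) (x : Fin 2 → ℝ)
    (hφ : DifferentiableAt ℝ φ x) (hφ' : IsUnit (jacobian φ x))
    (hq : DifferentiableAt ℝ q (φ x))
    (hreg : LinearIndependent ℝ (fun i : Fin 2 => partialDeriv q (φ x) i))
    (hu : DifferentiableAt ℝ u (φ x)) (hv : DifferentiableAt ℝ v (φ x)) :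
    ∑ i : Fin 2, ∑ j : Fin 2, (firstFF (q ∘ φ) x)⁻¹ i j *
        partialDerivS (u ∘ φ) x i * partialDerivS (v ∘ φ) x j =
      ∑ i : Fin 2, ∑ j : Fin 2, (firstFF q (φ x))⁻¹ i j *
        partialDerivS u (φ x) i * partialDerivS v (φ x) j := by
  set J := jacobian φ x with hJdef
  set G := firstFF q (φ x) with hGdef
  set a : Fin 2 → ℝ := fun i => partialDerivS u (φ x) i with ha
  set b : Fin 2 → ℝ := fun i => partialDerivS v (φ x) i with hb
  set p : Fin 2 → Fin 3 → ℝ := fun i => partialDeriv q (φ x) i with hp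
  have hw : ∀ i : Fin 2, fderiv ℝ φ x (Pi.single i 1) = fun k => J k i := by
    intro i; funext k
    simp only [hJdef, jacobian, LinearMap.toMatrix'_apply, ContinuousLinearMap.coe_coe]
  -- chain rule for q ∘ φ
  have hqc : ∀ i : Fin 2, partialDeriv (q ∘ φ) x i = ∑ k : Fin 2, J k i • p k := by
    intro i
    have hcomp : fderiv ℝ (q ∘ φ) x = (fderiv ℝ q (φ x)).comp (fderiv ℝ φ x) :=
      fderiv_comp x hq hφ
    rw [partialDeriv, hcomp]
    simp only [ContinuousLinearMap.coe_comp', Function.comp_apply, hw i]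
    rw [vec_decomp (fun k => J k i), map_sum]
    simp [hp, partialDeriv]
  -- chain rule for scalars
  have hsc : ∀ (f : (Fin 2 → ℝ) → ℝ), DifferentiableAt ℝ f (φ x) → ∀ (i : Fin 2),
      partialDerivS (f ∘ φ) x i = ∑ k : Fin 2, J k i * partialDerivS f (φ x) k := by
    intro f hf i
    have hcomp : fderiv ℝ (f ∘ φ) x = (fderiv ℝ f (φ x)).comp (fderiv ℝ φ x) :=
      fderiv_comp x hf hφ
    rw [partialDerivS, hcomp]
    simp only [ContinuousLinearMap.coe_comp', Function.comp_apply, hw i]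
    rw [vec_decomp (fun k => J k i), map_sum]
    simp [partialDerivS, mul_comm]
  have hGc : firstFF (q ∘ φ) x = Jᵀ * G * J := by
    ext i j
    rw [firstFF]
    simp only [Matrix.of_apply, hqc, Matrix.mul_apply, transpose_apply]
    simp only [hGdef, firstFF, Matrix.of_apply, dotProduct, Fin.sum_univ_two,
      Fin.sum_univ_three, Finset.sum_apply, Pi.smul_apply, smul_eq_mul, hp]
    ring
  have hau : ∀ i, partialDerivS (u ∘ φ) x i = Jᵀ.mulVec a i := by
    intro i; rw [hsc u hu i]; simp [mulVec, dotProduct, transpose_apply, ha]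
  have hbv : ∀ i, partialDerivS (v ∘ φ) x i = Jᵀ.mulVec b i := by
    intro i; rw [hsc v hv i]; simp [mulVec, dotProduct, transpose_apply, hb]
  -- invertibility of the Gram matrix
  have hGu : IsUnit G.det := by
    rw [isUnit_iff_ne_zero]
    intro h0
    obtain ⟨c, hc0, hc⟩ := (Matrix.exists_mulVec_eq_zero_iff).2 h0
    have hcc : c ⬝ᵥ G.mulVec c = 0 := by rw [hc]; simp
    have h1 : (∑ i : Fin 2, c i • p i) ⬝ᵥ (∑ j : Fin 2, c j • p j) = 0 := by
      rw [← hcc]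
      simp only [hGdef, firstFF, Matrix.of_apply, dotProduct, mulVec, hp,
        Fin.sum_univ_two, Fin.sum_univ_three, Finset.sum_apply, Pi.smul_apply,
        smul_eq_mul]
      ring
    have h2 : (∑ i : Fin 2, c i • p i) = 0 := dotProduct_self_eq_zero.1 h1
    have := linearIndependent_iff'.1 hreg Finset.univ c (by simpa [hp] using h2)
    exact hc0 (funext fun i => this i (Finset.mem_univ i))
  have hJu : IsUnit J.det := (Matrix.isUnit_iff_isUnit_det J).1 hφ'
  have hJtu : IsUnit Jᵀ.det := by rwa [Matrix.det_transpose]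
  have hM : (Jᵀ * G * J)⁻¹ = J⁻¹ * G⁻¹ * Jᵀ⁻¹ := by
    rw [Matrix.mul_inv_rev, Matrix.mul_inv_rev, mul_assoc]
  have hmat : J * (J⁻¹ * G⁻¹ * Jᵀ⁻¹ * Jᵀ) = G⁻¹ := by
    rw [mul_assoc (J⁻¹ * G⁻¹), Matrix.nonsing_inv_mul _ hJtu, mul_one, ← mul_assoc,
      Matrix.mul_nonsing_inv _ hJu, one_mul]
  calc ∑ i : Fin 2, ∑ j : Fin 2, (firstFF (q ∘ φ) x)⁻¹ i j *
        partialDerivS (u ∘ φ) x i * partialDerivS (v ∘ φ) x j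
      = (Jᵀ.mulVec a) ⬝ᵥ ((Jᵀ * G * J)⁻¹).mulVec (Jᵀ.mulVec b) := by
        rw [← sum_sum_eq_dot]
        refine Finset.sum_congr rfl fun i _ => Finset.sum_congr rfl fun j _ => ?_
        rw [hGc, hau, hbv]
    _ = a ⬝ᵥ G⁻¹.mulVec b := by
        rw [hM, Matrix.mulVec_mulVec, Matrix.mulVec_transpose,
          ← Matrix.dotProduct_mulVec, Matrix.mulVec_mulVec, hmat]
    _ = ∑ i : Fin 2, ∑ j : Fin 2, G⁻¹ i j * a i * b j := (sum_sum_eq_dot _ _ _).symm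
end

section
/- Let M ⊂ ℝ² be an open bounded set, let φ : M → M be a C¹ diffeomorphism of M onto itself, let q : M → ℝ³ be a C¹ map that is regular at every point of M, let u, v : M → ℝ³ be C¹ vector fields, and let α > 0. Assume that the integrand defining ⟨u, v⟩_q (and the corresponding integrand for the reparametrized data) is Lebesgue integrable on M. Then the H¹-type inner metric is invariant under reparametrization: ⟨u∘φ, v∘φ⟩_{q∘φ} = ⟨u, v⟩_q. -/
open Matrix

/-- The volume density `vol(g)(x) = √(det g(q)(x))`. -/
noncomputable def volDensity (q : (Fin 2 → ℝ) → Fin 3 → ℝ) (x : Fin 2 → ℝ) : ℝ :=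
  Real.sqrt (firstFF q x).det

/-- The integrand of the `H¹`-type inner metric:
`Σₖ ( uᵏ(x) vᵏ(x) + α² Σᵢⱼ g^{ij}(x) ∂ᵢuᵏ(x) ∂ⱼvᵏ(x) ) · vol(g)(x)`. -/
noncomputable def innerMetricIntegrand (α : ℝ) (q u v : (Fin 2 → ℝ) → Fin 3 → ℝ)
    (x : Fin 2 → ℝ) : ℝ :=
  (∑ k : Fin 3, (u x k * v x k +
      α ^ 2 * ∑ i : Fin 2, ∑ j : Fin 2, (firstFF q x)⁻¹ i j *
        partialDerivS (fun y => u y k) x i * partialDerivS (fun y => v y k) x j)) *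
    volDensity q x

/-- The `H¹`-type inner metric `⟨u, v⟩_q` on vector fields along the surface `q`,
integrated over the parameter domain `M`. -/
noncomputable def innerMetric (M : Set (Fin 2 → ℝ)) (α : ℝ)
    (q u v : (Fin 2 → ℝ) → Fin 3 → ℝ) : ℝ :=
  ∫ x in M, innerMetricIntegrand α q u v x

lemma pi_eq_sum_single (w : Fin 2 → ℝ) :
    w = ∑ l : Fin 2, w l • (Pi.single l 1 : Fin 2 → ℝ) := by
  funext j
  simp [Pi.single_apply, Finset.sum_apply]

lemma clm_apply_eq_sum {F : Type*} [NormedAddCommGroup F] [NormedSpace ℝ F]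
    (L : (Fin 2 → ℝ) →L[ℝ] F) (w : Fin 2 → ℝ) :
    L w = ∑ l : Fin 2, w l • L (Pi.single l 1) := by
  conv_lhs => rw [pi_eq_sum_single w]
  rw [map_sum]
  simp

lemma gram_posDef {p : Fin 2 → Fin 3 → ℝ} (h : LinearIndependent ℝ p) :
    (Matrix.of fun i j => p i ⬝ᵥ p j).PosDef := by
  rw [Matrix.posDef_iff_dotProduct_mulVec]
  constructor
  · ext i j
    simp only [Matrix.conjTranspose_apply, Matrix.of_apply, star_trivial]
    exact dotProduct_comm _ _
  · intro x hx
    have hw : (∑ i, x i • p i) ≠ 0 := by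
      intro h0
      exact hx (funext fun i => (Fintype.linearIndependent_iff.mp h) x h0 i)
    have hcalc : star x ⬝ᵥ ((Matrix.of fun i j => p i ⬝ᵥ p j) *ᵥ x)
        = (∑ i, x i • p i) ⬝ᵥ (∑ j, x j • p j) := by
      simp only [dotProduct, Matrix.mulVec, Matrix.of_apply, star_trivial,
        Finset.sum_apply, Pi.smul_apply, smul_eq_mul, Fin.sum_univ_two, Fin.sum_univ_three]
      ring
    rw [hcalc]
    have h1 : 0 ≤ (∑ i, x i • p i) ⬝ᵥ (∑ j, x j • p j) := by
      rw [dotProduct]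
      exact Finset.sum_nonneg fun k _ => mul_self_nonneg _
    rcases h1.lt_or_eq with h2 | h2
    · exact h2
    · exact absurd (dotProduct_self_eq_zero.mp h2.symm) hw

lemma double_sum_eq_dot (B : Matrix (Fin 2) (Fin 2) ℝ) (s t : Fin 2 → ℝ) :
    ∑ i, ∑ j, B i j * s i * t j = s ⬝ᵥ (B *ᵥ t) := by
  simp only [dotProduct, Matrix.mulVec, Finset.mul_sum]
  exact Finset.sum_congr rfl fun i _ => Finset.sum_congr rfl fun j _ => by ring

/-- let `M ⊂ ℝ²` be an open bounded set, `φ : M → M` a C¹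
diffeomorphism of `M` onto itself, `q : M → ℝ³` a C¹ map regular at every point
of `M`, `u, v : M → ℝ³` C¹ vector fields, and `α > 0`. If the integrand defining
`⟨u, v⟩_q` (and the corresponding integrand for the reparametrized data) is
Lebesgue integrable on `M`, then the `H¹`-type inner metric is invariant under
reparametrization: `⟨u∘φ, v∘φ⟩_{q∘φ} = ⟨u, v⟩_q`. -/
theorem innerMetric_reparam_invariant (M : Set (Fin 2 → ℝ))
    (hM : IsOpen M) (hMb : Bornology.IsBounded M)
    (φ ψ : (Fin 2 → ℝ) → Fin 2 → ℝ) (q u v : (Fin 2 → ℝ) → Fin 3 → ℝ) (α : ℝ)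
    (hφ : ContDiffOn ℝ 1 φ M) (hφbij : Set.BijOn φ M M)
    (hψ : ContDiffOn ℝ 1 ψ M) (hψinv : Set.InvOn ψ φ M M)
    (hq : ContDiffOn ℝ 1 q M)
    (hreg : ∀ x ∈ M, LinearIndependent ℝ (fun i : Fin 2 => partialDeriv q x i))
    (hu : ContDiffOn ℝ 1 u M) (hv : ContDiffOn ℝ 1 v M) (hα : 0 < α)
    (hint : MeasureTheory.IntegrableOn (innerMetricIntegrand α q u v) M)
    (hint' : MeasureTheory.IntegrableOn
      (innerMetricIntegrand α (q ∘ φ) (u ∘ φ) (v ∘ φ)) M) :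
    innerMetric M α (q ∘ φ) (u ∘ φ) (v ∘ φ) = innerMetric M α q u v := by
  classical
  have hMmeas : MeasurableSet M := hM.measurableSet
  have key : ∀ x ∈ M,
      innerMetricIntegrand α (q ∘ φ) (u ∘ φ) (v ∘ φ) x
        = |(fderiv ℝ φ x).det| • innerMetricIntegrand α q u v (φ x) := by
    intro x hx
    have hy : φ x ∈ M := hφbij.mapsTo hx
    have hφd : DifferentiableAt ℝ φ x :=
      (hφ.contDiffAt (hM.mem_nhds hx)).differentiableAt one_ne_zero
    have hψd : DifferentiableAt ℝ ψ (φ x) :=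
      (hψ.contDiffAt (hM.mem_nhds hy)).differentiableAt one_ne_zero
    have hqd : DifferentiableAt ℝ q (φ x) :=
      (hq.contDiffAt (hM.mem_nhds hy)).differentiableAt one_ne_zero
    have hud : DifferentiableAt ℝ u (φ x) :=
      (hu.contDiffAt (hM.mem_nhds hy)).differentiableAt one_ne_zero
    have hvd : DifferentiableAt ℝ v (φ x) :=
      (hv.contDiffAt (hM.mem_nhds hy)).differentiableAt one_ne_zero
    have huφd : DifferentiableAt ℝ (u ∘ φ) x := hud.comp x hφd
    have hvφd : DifferentiableAt ℝ (v ∘ φ) x := hvd.comp x hφd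
    set J : Matrix (Fin 2) (Fin 2) ℝ :=
      LinearMap.toMatrix' ((fderiv ℝ φ x : (Fin 2 → ℝ) →ₗ[ℝ] (Fin 2 → ℝ))) with hJdef
    have hJapp : ∀ w, fderiv ℝ φ x w = J *ᵥ w := by
      intro w
      have h1 : Matrix.toLin' J = (fderiv ℝ φ x : (Fin 2 → ℝ) →ₗ[ℝ] (Fin 2 → ℝ)) :=
        Matrix.toLin'_toMatrix' _
      calc fderiv ℝ φ x w
          = ((fderiv ℝ φ x : (Fin 2 → ℝ) →ₗ[ℝ] (Fin 2 → ℝ))) w := rfl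
        _ = Matrix.toLin' J w := by rw [h1]
        _ = J *ᵥ w := Matrix.toLin'_apply _ _
    have hJcol : ∀ i : Fin 2, fderiv ℝ φ x (Pi.single i 1) = fun l => J l i := by
      intro i
      rw [hJapp, Matrix.mulVec_single]
      funext l; simp
    -- chain rule (vector version)
    have hchain : ∀ (f : (Fin 2 → ℝ) → Fin 3 → ℝ), DifferentiableAt ℝ f (φ x) →
        ∀ i : Fin 2, partialDeriv (f ∘ φ) x i
          = ∑ l : Fin 2, J l i • partialDeriv f (φ x) l := by
      intro f hf i
      unfold partialDeriv
      rw [fderiv_comp x hf hφd, ContinuousLinearMap.comp_apply,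
        clm_apply_eq_sum (fderiv ℝ f (φ x)) (fderiv ℝ φ x (Pi.single i 1))]
      refine Finset.sum_congr rfl fun l _ => ?_
      rw [congrFun (hJcol i) l]
    -- components of partial derivatives
    have hcompPD : ∀ (f : (Fin 2 → ℝ) → Fin 3 → ℝ) (w : Fin 2 → ℝ),
        DifferentiableAt ℝ f w → ∀ (k : Fin 3) (i : Fin 2),
        partialDerivS (fun z => f z k) w i = partialDeriv f w i k := by
      intro f w hf k i
      unfold partialDerivS partialDeriv
      have h1 : (fun z => f z k)
          = (ContinuousLinearMap.proj (R := ℝ) (φ := fun _ : Fin 3 => ℝ) k) ∘ f := rfl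
      rw [h1, fderiv_comp w (ContinuousLinearMap.proj k).differentiableAt hf,
        ContinuousLinearMap.comp_apply, ContinuousLinearMap.fderiv]
      rfl
    have hB : firstFF (q ∘ φ) x = Jᵀ * firstFF q (φ x) * J := by
      ext i j
      show partialDeriv (q ∘ φ) x i ⬝ᵥ partialDeriv (q ∘ φ) x j
        = (Jᵀ * firstFF q (φ x) * J) i j
      rw [hchain q hqd i, hchain q hqd j]
      simp only [firstFF, Matrix.mul_apply, Matrix.transpose_apply, Matrix.of_apply,
        dotProduct, Finset.sum_apply, Pi.smul_apply, smul_eq_mul,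
        Fin.sum_univ_two, Fin.sum_univ_three]
      ring
    have hGpd : (firstFF q (φ x)).PosDef := gram_posDef (hreg (φ x) hy)
    have hGdetpos : 0 < (firstFF q (φ x)).det := hGpd.det_pos
    have hGdet : IsUnit (firstFF q (φ x)).det := isUnit_iff_ne_zero.mpr (ne_of_gt hGdetpos)
    -- J is invertible
    have hinvid : (fderiv ℝ ψ (φ x)).comp (fderiv ℝ φ x)
        = ContinuousLinearMap.id ℝ (Fin 2 → ℝ) := by
      have heq : ψ ∘ φ =ᶠ[nhds x] id :=
        Filter.eventuallyEq_of_mem (hM.mem_nhds hx) fun z hz => hψinv.1 hz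
      have h1 : fderiv ℝ (ψ ∘ φ) x = fderiv ℝ (id : (Fin 2 → ℝ) → Fin 2 → ℝ) x :=
        heq.fderiv_eq
      rw [fderiv_comp x hψd hφd] at h1
      rw [h1, fderiv_id]
    have hKJ : LinearMap.toMatrix' ((fderiv ℝ ψ (φ x) : (Fin 2 → ℝ) →ₗ[ℝ] (Fin 2 → ℝ))) * J
        = 1 := by
      rw [hJdef, ← LinearMap.toMatrix'_comp]
      have h2 : ((fderiv ℝ ψ (φ x) : (Fin 2 → ℝ) →ₗ[ℝ] (Fin 2 → ℝ))).comp
          ((fderiv ℝ φ x : (Fin 2 → ℝ) →ₗ[ℝ] (Fin 2 → ℝ)))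
          = LinearMap.id := by
        rw [← ContinuousLinearMap.toLinearMap_comp, hinvid]
        rfl
      rw [h2, LinearMap.toMatrix'_id]
    have hJdet : IsUnit J.det := by
      refine IsUnit.of_mul_eq_one (LinearMap.toMatrix'
        ((fderiv ℝ ψ (φ x) : (Fin 2 → ℝ) →ₗ[ℝ] (Fin 2 → ℝ)))).det ?_
      rw [← Matrix.det_mul, mul_eq_one_comm.mp hKJ, Matrix.det_one]
    have hJTdet : IsUnit Jᵀ.det := by rwa [Matrix.det_transpose]
    have hJdeteq : J.det = (fderiv ℝ φ x).det := LinearMap.det_toMatrix' _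
    -- determinant and volume density
    have hdetB : (firstFF (q ∘ φ) x).det = J.det ^ 2 * (firstFF q (φ x)).det := by
      rw [hB, Matrix.det_mul, Matrix.det_mul, Matrix.det_transpose]; ring
    have hvol : volDensity (q ∘ φ) x = |(fderiv ℝ φ x).det| * volDensity q (φ x) := by
      unfold volDensity
      rw [hdetB, Real.sqrt_mul (sq_nonneg _), Real.sqrt_sq_eq_abs, hJdeteq]
    -- inverse of first fundamental form
    have hBinv : (firstFF (q ∘ φ) x)⁻¹ = J⁻¹ * ((firstFF q (φ x))⁻¹ * (Jᵀ)⁻¹) := by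
      rw [hB, Matrix.mul_inv_rev, Matrix.mul_inv_rev]
    -- the H¹ gradient term is invariant
    have hsum : ∀ k : Fin 3,
        (∑ i : Fin 2, ∑ j : Fin 2, (firstFF (q ∘ φ) x)⁻¹ i j *
          partialDerivS (fun z => (u ∘ φ) z k) x i *
          partialDerivS (fun z => (v ∘ φ) z k) x j)
        = ∑ i : Fin 2, ∑ j : Fin 2, (firstFF q (φ x))⁻¹ i j *
          partialDerivS (fun z => u z k) (φ x) i *
          partialDerivS (fun z => v z k) (φ x) j := by
      intro k
      set du : Fin 2 → ℝ := fun a => partialDerivS (fun z => u z k) (φ x) a with hdu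
      set dv : Fin 2 → ℝ := fun a => partialDerivS (fun z => v z k) (φ x) a with hdv
      have hs : ∀ (f : (Fin 2 → ℝ) → Fin 3 → ℝ), DifferentiableAt ℝ f (φ x) →
          ∀ i : Fin 2, partialDerivS (fun z => (f ∘ φ) z k) x i
            = ((fun a => partialDerivS (fun z => f z k) (φ x) a) ᵥ* J) i := by
        intro f hf i
        have hfφd : DifferentiableAt ℝ (f ∘ φ) x := hf.comp x hφd
        calc partialDerivS (fun z => (f ∘ φ) z k) x i
            = partialDeriv (f ∘ φ) x i k := hcompPD (f ∘ φ) x hfφd k i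
          _ = (∑ l : Fin 2, J l i • partialDeriv f (φ x) l) k := by
              rw [hchain f hf i]
          _ = ∑ l : Fin 2, J l i * partialDeriv f (φ x) l k := by
              simp [Finset.sum_apply]
          _ = ((fun a => partialDerivS (fun z => f z k) (φ x) a) ᵥ* J) i := by
              simp only [Matrix.vecMul, dotProduct]
              refine Finset.sum_congr rfl fun l _ => ?_
              rw [hcompPD f (φ x) hf k l]
              ring
      have hmat : J⁻¹ * ((firstFF q (φ x))⁻¹ * (Jᵀ)⁻¹) * Jᵀ
          = J⁻¹ * (firstFF q (φ x))⁻¹ := by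
        rw [Matrix.mul_assoc (J⁻¹), Matrix.mul_assoc ((firstFF q (φ x))⁻¹),
          Matrix.nonsing_inv_mul _ hJTdet, Matrix.mul_one]
      have hmat2 : J * (J⁻¹ * (firstFF q (φ x))⁻¹) = (firstFF q (φ x))⁻¹ := by
        rw [← Matrix.mul_assoc, Matrix.mul_nonsing_inv _ hJdet, Matrix.one_mul]
      calc (∑ i : Fin 2, ∑ j : Fin 2, (firstFF (q ∘ φ) x)⁻¹ i j *
            partialDerivS (fun z => (u ∘ φ) z k) x i *
            partialDerivS (fun z => (v ∘ φ) z k) x j)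
          = ∑ i : Fin 2, ∑ j : Fin 2, (firstFF (q ∘ φ) x)⁻¹ i j *
            (du ᵥ* J) i * (dv ᵥ* J) j := by
            refine Finset.sum_congr rfl fun i _ => Finset.sum_congr rfl fun j _ => ?_
            rw [hs u hud i, hs v hvd j]
        _ = (du ᵥ* J) ⬝ᵥ ((firstFF (q ∘ φ) x)⁻¹ *ᵥ (dv ᵥ* J)) := double_sum_eq_dot _ _ _
        _ = (du ᵥ* J) ⬝ᵥ ((J⁻¹ * ((firstFF q (φ x))⁻¹ * (Jᵀ)⁻¹)) *ᵥ (Jᵀ *ᵥ dv)) := by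
            rw [hBinv, Matrix.mulVec_transpose]
        _ = (du ᵥ* J) ⬝ᵥ ((J⁻¹ * ((firstFF q (φ x))⁻¹ * (Jᵀ)⁻¹) * Jᵀ) *ᵥ dv) := by
            rw [Matrix.mulVec_mulVec]
        _ = (du ᵥ* J) ⬝ᵥ ((J⁻¹ * (firstFF q (φ x))⁻¹) *ᵥ dv) := by rw [hmat]
        _ = ((du ᵥ* J) ᵥ* (J⁻¹ * (firstFF q (φ x))⁻¹)) ⬝ᵥ dv :=
            Matrix.dotProduct_mulVec _ _ _
        _ = (du ᵥ* (J * (J⁻¹ * (firstFF q (φ x))⁻¹))) ⬝ᵥ dv := by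
            rw [Matrix.vecMul_vecMul]
        _ = (du ᵥ* (firstFF q (φ x))⁻¹) ⬝ᵥ dv := by rw [hmat2]
        _ = du ⬝ᵥ ((firstFF q (φ x))⁻¹ *ᵥ dv) := (Matrix.dotProduct_mulVec _ _ _).symm
        _ = ∑ i : Fin 2, ∑ j : Fin 2, (firstFF q (φ x))⁻¹ i j * du i * dv j :=
            (double_sum_eq_dot _ _ _).symm
    -- assemble
    unfold innerMetricIntegrand
    rw [hvol, smul_eq_mul]
    have husum : (∑ k : Fin 3, ((u ∘ φ) x k * (v ∘ φ) x k +
          α ^ 2 * ∑ i : Fin 2, ∑ j : Fin 2, (firstFF (q ∘ φ) x)⁻¹ i j *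
            partialDerivS (fun y => (u ∘ φ) y k) x i *
            partialDerivS (fun y => (v ∘ φ) y k) x j))
        = ∑ k : Fin 3, (u (φ x) k * v (φ x) k +
          α ^ 2 * ∑ i : Fin 2, ∑ j : Fin 2, (firstFF q (φ x))⁻¹ i j *
            partialDerivS (fun y => u y k) (φ x) i *
            partialDerivS (fun y => v y k) (φ x) j) := by
      refine Finset.sum_congr rfl fun k _ => ?_
      rw [hsum k]
      rfl
    rw [husum]
    ring
  have hderiv : ∀ z ∈ M, HasFDerivWithinAt φ (fderiv ℝ φ z) M z := fun z hz =>
    ((hφ.contDiffAt (hM.mem_nhds hz)).differentiableAt one_ne_zero).hasFDerivAt.hasFDerivWithinAt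
  unfold innerMetric
  calc (∫ z in M, innerMetricIntegrand α (q ∘ φ) (u ∘ φ) (v ∘ φ) z)
      = ∫ z in M, |(fderiv ℝ φ z).det| • innerMetricIntegrand α q u v (φ z) :=
        MeasureTheory.setIntegral_congr_fun hMmeas fun z hz => key z hz
    _ = ∫ z in φ '' M, innerMetricIntegrand α q u v z :=
        (MeasureTheory.integral_image_eq_integral_abs_det_fderiv_smul MeasureTheory.volume
          hMmeas hderiv hφbij.injOn _).symm
    _ = ∫ z in M, innerMetricIntegrand α q u v z := by rw [hφbij.image_eq]
end

section
/- Let m ∈ ℕ, Δt > 0, N ≥ 1, and let b : ℝᵐ → Matₘ(ℝ) be a differentiable map whose value b(ξ) at every ξ ∈ ℝᵐ is a symmetric positive definite m×m matrix. Define E : (ℝᵐ)^N × (ℝᵐ)^N × (ℝᵐ)^{N+1} → ℝ by E(u, p, q) = Σ_{i=0}^{N-1} [ (Δt/2) ⟨b(qᵢ) uᵢ, uᵢ⟩ + ⟨pᵢ, q_{i+1} − qᵢ − Δt uᵢ⟩ ], where ⟨·,·⟩ is the Euclidean inner product on ℝᵐ. Suppose (u, p, q) is a critical point of E in the sense that all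 partial derivatives of E with respect to each uᵢ (0 ≤ i ≤ N−1), each pᵢ (0 ≤ i ≤ N−1), and each interior qᵢ (1 ≤ i ≤ N−1) vanish. Then: (a) q_{i+1} = qᵢ + Δt·uᵢ for all 0 ≤ i ≤ N−1; (b) pᵢ = b(qᵢ) uᵢ for all 0 ≤ i ≤ N−1; and (c) for all 0 ≤ i ≤ N−2 and all w ∈ ℝᵐ, ⟨b(q_{i+1}) u_{i+1}, w⟩ = ⟨b(qᵢ) uᵢ, w⟩ + (Δt/2) ⟨(Db(q_{i+1})[w]) u_{i+1}, u_{i+1}⟩, where Db(ξ)[w] denotes the derivative of b at ξ in the direction w. -/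
open Matrix

/-- The discrete action
`E(u, p, q) = Σ_{i=0}^{N-1} (Δt/2)⟨b(qᵢ)uᵢ, uᵢ⟩ + ⟨pᵢ, q_{i+1} − qᵢ − Δt uᵢ⟩`,
where `⟨·,·⟩` is the Euclidean inner product on `ℝᵐ`. -/
noncomputable def discreteEnergy (m N : ℕ) (Δt : ℝ)
    (b : (Fin m → ℝ) → Matrix (Fin m) (Fin m) ℝ)
    (u p : Fin N → Fin m → ℝ) (q : Fin (N + 1) → Fin m → ℝ) : ℝ :=
  ∑ i : Fin N,
    (Δt / 2 * ((b (q i.castSucc) *ᵥ u i) ⬝ᵥ u i) +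
      p i ⬝ᵥ (q i.succ - q i.castSucc - Δt • u i))

/-- The directional derivative `Db(ξ)[w]` of a matrix-valued map `b` at `ξ` in the
direction `w`, taken entrywise. -/
noncomputable def matrixDirDeriv (m : ℕ) (b : (Fin m → ℝ) → Matrix (Fin m) (Fin m) ℝ)
    (ξ w : Fin m → ℝ) : Matrix (Fin m) (Fin m) ℝ :=
  Matrix.of fun i j => fderiv ℝ (fun ζ => b ζ i j) ξ w

lemma line_hasDerivAt {m : ℕ} (g : (Fin m → ℝ) → ℝ) (hg : Differentiable ℝ g)
    (ξ w : Fin m → ℝ) :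
    HasDerivAt (fun t : ℝ => g (ξ + t • w)) (fderiv ℝ g ξ w) 0 := by
  have h1 : HasDerivAt (fun t : ℝ => ξ + t • w) w 0 := by
    simpa using ((hasDerivAt_id (0:ℝ)).smul_const w).const_add ξ
  have h2 := (hg (ξ + (0:ℝ) • w)).hasFDerivAt.comp_hasDerivAt 0 h1
  simpa [Function.comp_def] using h2

lemma quad_hasDerivAt {m : ℕ} (b : (Fin m → ℝ) → Matrix (Fin m) (Fin m) ℝ)
    (hb : ∀ i j : Fin m, Differentiable ℝ (fun ξ : Fin m → ℝ => b ξ i j))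
    (ξ w v : Fin m → ℝ) :
    HasDerivAt (fun t : ℝ => (b (ξ + t • w) *ᵥ v) ⬝ᵥ v)
      ((matrixDirDeriv m b ξ w *ᵥ v) ⬝ᵥ v) 0 := by
  simp only [mulVec, dotProduct, matrixDirDeriv, Matrix.of_apply, Finset.sum_mul]
  apply HasDerivAt.fun_sum
  intro a _
  apply HasDerivAt.fun_sum
  intro c _
  exact ((line_hasDerivAt (fun ζ => b ζ a c) (hb a c) ξ w).mul_const (v c)).mul_const (v a)

lemma symm_dot {m : ℕ} (B : Matrix (Fin m) (Fin m) ℝ) (hB : B.IsHermitian)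
    (v w : Fin m → ℝ) : (B *ᵥ v) ⬝ᵥ w = (B *ᵥ w) ⬝ᵥ v := by
  have ht : Bᵀ = B := by
    rw [← conjTranspose_eq_transpose_of_trivial]; exact hB.eq
  rw [dotProduct_comm, dotProduct_mulVec, ← mulVec_transpose, ht]

/-- let `Δt > 0`, `N ≥ 1`, and let `b : ℝᵐ → Matₘ(ℝ)` be a
differentiable field of symmetric positive definite matrices. If `(u, p, q)` is a
critical point of the discrete action `E` — all partial derivatives of `E` with
respect to each `uᵢ` (`0 ≤ i ≤ N−1`), each `pᵢ` (`0 ≤ i ≤ N−1`) and each interior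
`qᵢ` (`1 ≤ i ≤ N−1`) vanish — then:
(a) `q_{i+1} = qᵢ + Δt·uᵢ` for all `0 ≤ i ≤ N−1`;
(b) `pᵢ = b(qᵢ)uᵢ` for all `0 ≤ i ≤ N−1`;
(c) for all `0 ≤ i ≤ N−2` and all `w ∈ ℝᵐ`,
`⟨b(q_{i+1})u_{i+1}, w⟩ = ⟨b(qᵢ)uᵢ, w⟩ + (Δt/2)⟨(Db(q_{i+1})[w])u_{i+1}, u_{i+1}⟩`. -/
theorem discrete_variational_principle (m N : ℕ) (Δt : ℝ) (hΔt : 0 < Δt) (hN : 1 ≤ N)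
    (b : (Fin m → ℝ) → Matrix (Fin m) (Fin m) ℝ)
    (hb : ∀ i j : Fin m, Differentiable ℝ (fun ξ : Fin m → ℝ => b ξ i j))
    (hbpos : ∀ ξ : Fin m → ℝ, (b ξ).PosDef)
    (u p : Fin N → Fin m → ℝ) (q : Fin (N + 1) → Fin m → ℝ)
    (hcrit_u : ∀ (i : Fin N) (w : Fin m → ℝ),
      deriv (fun t : ℝ =>
        discreteEnergy m N Δt b (Function.update u i (u i + t • w)) p q) 0 = 0)
    (hcrit_p : ∀ (i : Fin N) (w : Fin m → ℝ),
      deriv (fun t : ℝ =>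
        discreteEnergy m N Δt b u (Function.update p i (p i + t • w)) q) 0 = 0)
    (hcrit_q : ∀ (i : Fin (N + 1)), i ≠ 0 → i ≠ Fin.last N → ∀ w : Fin m → ℝ,
      deriv (fun t : ℝ =>
        discreteEnergy m N Δt b u p (Function.update q i (q i + t • w))) 0 = 0) :
    (∀ i : Fin N, q i.succ = q i.castSucc + Δt • u i) ∧
    (∀ i : Fin N, p i = b (q i.castSucc) *ᵥ u i) ∧
    (∀ (i : Fin N) (hi : (i : ℕ) + 1 < N) (w : Fin m → ℝ),
      (b (q i.succ) *ᵥ u ⟨(i : ℕ) + 1, hi⟩) ⬝ᵥ w =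
        (b (q i.castSucc) *ᵥ u i) ⬝ᵥ w +
          Δt / 2 * ((matrixDirDeriv m b (q i.succ) w *ᵥ u ⟨(i : ℕ) + 1, hi⟩) ⬝ᵥ
            u ⟨(i : ℕ) + 1, hi⟩)) := by
  set E0 : ℝ := discreteEnergy m N Δt b u p q with hE0
  -- Part (a)
  have ha : ∀ i : Fin N, q i.succ = q i.castSucc + Δt • u i := by
    intro i
    have hdot : ∀ w : Fin m → ℝ, w ⬝ᵥ (q i.succ - q i.castSucc - Δt • u i) = 0 := by
      intro w
      set c : ℝ := w ⬝ᵥ (q i.succ - q i.castSucc - Δt • u i) with hc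
      have hfun : (fun t : ℝ =>
          discreteEnergy m N Δt b u (Function.update p i (p i + t • w)) q)
          = fun t => t * c + E0 := by
        funext t
        have hd : discreteEnergy m N Δt b u (Function.update p i (p i + t • w)) q
            - E0 = t * c := by
          simp only [discreteEnergy, hE0]
          rw [← Finset.sum_sub_distrib, Finset.sum_eq_single i]
          · simp only [Function.update_self, add_dotProduct, smul_dotProduct,
              dotProduct_sub, dotProduct_smul, smul_eq_mul, hc]
            ring
          · intro j _ hj; simp [Function.update_of_ne hj]
          · simp
        linarith
      have hder : HasDerivAt (fun t : ℝ => t * c + E0) c 0 := by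
        simpa using ((hasDerivAt_id (0:ℝ)).mul_const c).add_const E0
      have h := hcrit_p i w
      rw [hfun, hder.deriv] at h
      exact h
    have h0 := hdot (q i.succ - q i.castSucc - Δt • u i)
    rw [dotProduct_self_eq_zero] at h0
    have h1 : q i.succ - (q i.castSucc + Δt • u i) = 0 := by
      rw [← sub_sub]; exact h0
    exact sub_eq_zero.mp h1
  -- Part (b)
  have hbeq : ∀ i : Fin N, p i = b (q i.castSucc) *ᵥ u i := by
    intro i
    have hdot : ∀ w : Fin m → ℝ,
        (b (q i.castSucc) *ᵥ u i - p i) ⬝ᵥ w = 0 := by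
      intro w
      set B := b (q i.castSucc) with hB
      set L : ℝ := Δt * ((B *ᵥ u i) ⬝ᵥ w) - Δt * (p i ⬝ᵥ w) with hL
      set K : ℝ := Δt / 2 * ((B *ᵥ w) ⬝ᵥ w) with hK
      have hsym : (B *ᵥ w) ⬝ᵥ u i = (B *ᵥ u i) ⬝ᵥ w :=
        symm_dot B (hbpos _).1 w (u i)
      have hfun : (fun t : ℝ =>
          discreteEnergy m N Δt b (Function.update u i (u i + t • w)) p q)
          = fun t => t * L + t * t * K + E0 := by
        funext t
        have hd : discreteEnergy m N Δt b (Function.update u i (u i + t • w)) p q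
            - E0 = t * L + t * t * K := by
          simp only [discreteEnergy, hE0]
          rw [← Finset.sum_sub_distrib, Finset.sum_eq_single i]
          · simp only [Function.update_self, ← hB, mulVec_add, mulVec_smul,
              add_dotProduct, dotProduct_add, smul_dotProduct, dotProduct_smul,
              smul_eq_mul, dotProduct_sub, smul_add, smul_smul, hL, hK, hsym]
            ring
          · intro j _ hj; simp [Function.update_of_ne hj]
          · simp
        linarith
      have hder : HasDerivAt (fun t : ℝ => t * L + t * t * K + E0) L 0 := by
        have h1 : HasDerivAt (fun t : ℝ => t * L) L 0 := by
          simpa using (hasDerivAt_id (0:ℝ)).mul_const L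
        have h2 : HasDerivAt (fun t : ℝ => t * t * K) 0 0 := by
          simpa using ((hasDerivAt_id (0:ℝ)).mul (hasDerivAt_id (0:ℝ))).mul_const K
        simpa using (h1.add h2).add_const E0
      have h := hcrit_u i w
      rw [hfun, hder.deriv, hL] at h
      have hne : Δt ≠ 0 := ne_of_gt hΔt
      rw [sub_dotProduct]
      have h3 : Δt * ((B *ᵥ u i) ⬝ᵥ w - p i ⬝ᵥ w) = 0 := by ring_nf; ring_nf at h; linarith
      rcases mul_eq_zero.mp h3 with h4 | h4
      · exact absurd h4 hne
      · exact h4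
    have h0 := hdot (b (q i.castSucc) *ᵥ u i - p i)
    rw [dotProduct_self_eq_zero] at h0
    exact (sub_eq_zero.mp h0).symm
  -- Part (c)
  refine ⟨ha, hbeq, ?_⟩
  intro i hi w
  set i1 : Fin N := ⟨(i : ℕ) + 1, hi⟩ with hi1
  set j : Fin (N + 1) := i.succ with hj
  have hne : i ≠ i1 := by
    simp only [hi1, Ne, Fin.ext_iff]; omega
  have hj0 : j ≠ 0 := by
    simp only [hj, Ne, Fin.ext_iff, Fin.val_succ, Fin.val_zero]; omega
  have hjl : j ≠ Fin.last N := by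
    simp only [hj, Ne, Fin.ext_iff, Fin.val_succ, Fin.val_last]; omega
  have hcs : i1.castSucc = j := by
    simp only [hi1, hj, Fin.ext_iff, Fin.coe_castSucc, Fin.val_succ]
  have hcs' : i.castSucc ≠ j := by
    simp only [hj, Ne, Fin.ext_iff, Fin.coe_castSucc, Fin.val_succ]; omega
  have hs1 : i1.succ ≠ j := by
    simp only [hi1, hj, Ne, Fin.ext_iff, Fin.val_succ]; omega
  set D : ℝ := (matrixDirDeriv m b (q j) w *ᵥ u i1) ⬝ᵥ u i1 with hD
  set c2 : ℝ := p i ⬝ᵥ w - p i1 ⬝ᵥ w with hc2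
  set G0 : ℝ := (b (q j) *ᵥ u i1) ⬝ᵥ u i1 with hG0
  have hfun : (fun t : ℝ =>
      discreteEnergy m N Δt b u p (Function.update q j (q j + t • w)))
      = fun t => Δt / 2 * ((b (q j + t • w) *ᵥ u i1) ⬝ᵥ u i1)
          + (t * c2 + (E0 - Δt / 2 * G0)) := by
    funext t
    have hd : discreteEnergy m N Δt b u p (Function.update q j (q j + t • w))
        - E0 = Δt / 2 * ((b (q j + t • w) *ᵥ u i1) ⬝ᵥ u i1) - Δt / 2 * G0
          + t * c2 := by
      simp only [discreteEnergy, hE0]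
      rw [← Finset.sum_sub_distrib]
      rw [← Finset.sum_subset (Finset.subset_univ ({i, i1} : Finset (Fin N)))
        (by
          intro k _ hk
          simp only [Finset.mem_insert, Finset.mem_singleton, not_or] at hk
          have hk1 : k.castSucc ≠ j := by
            simp only [hj, Ne, Fin.ext_iff, Fin.coe_castSucc, Fin.val_succ]
            intro h
            exact hk.2 (by simp only [hi1, Fin.ext_iff]; omega)
          have hk2 : k.succ ≠ j := by
            simp only [hj, Ne, Fin.ext_iff, Fin.val_succ]
            intro h
            exact hk.1 (by simp only [Fin.ext_iff]; omega)
          simp [Function.update_of_ne hk1, Function.update_of_ne hk2])]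
      rw [Finset.sum_pair hne]
      rw [Function.update_of_ne hcs', Function.update_of_ne hs1, hcs, ← hj,
        Function.update_self]
      simp only [dotProduct_sub, dotProduct_add, dotProduct_smul, smul_eq_mul,
        hc2, hG0]
      ring
    linarith
  have hder : HasDerivAt (fun t : ℝ =>
      Δt / 2 * ((b (q j + t • w) *ᵥ u i1) ⬝ᵥ u i1)
        + (t * c2 + (E0 - Δt / 2 * G0))) (Δt / 2 * D + c2) 0 := by
    have h1 := (quad_hasDerivAt b hb (q j) w (u i1)).const_mul (Δt / 2)
    have h2 : HasDerivAt (fun t : ℝ => t * c2 + (E0 - Δt / 2 * G0)) c2 0 := by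
      simpa using ((hasDerivAt_id (0:ℝ)).mul_const c2).add_const (E0 - Δt / 2 * G0)
    simpa [hD, Pi.add_def] using h1.add h2
  have h := hcrit_q j hj0 hjl w
  rw [hfun, hder.deriv] at h
  have hp1 : p i1 ⬝ᵥ w = (b (q j) *ᵥ u i1) ⬝ᵥ w := by
    rw [hbeq i1, hcs]
  have hp0 : p i ⬝ᵥ w = (b (q i.castSucc) *ᵥ u i) ⬝ᵥ w := by rw [hbeq i]
  rw [hc2, hp1, hp0] at h
  linarith
end
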